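/- Let F be a field of characteristic zero and σ the shift automorphism of F[y] (y ↦ y + 1). Let u, v ∈ F[y] with v ≠ 0, and define the F-linear map φ : F[y] → F[y] by φ(p) = u·σ(p) − v·p. If deg(u) ≠ deg(v), then for every polynomial p ≠ 0, deg(φ(p)) = deg(p) + max(deg u, deg v); in particular φ is injective and the set of degrees not attained by nonzero elements of the image of φ is exactly {0, 1, …, max(deg u, deg v) − 1}. -/

import Mathlib

open Polynomial

theorem sigma_degree {F : Type*} [Field F] (σ : RingAut (Polynomial F))
    (hC : ∀ c : F, σ (C c) = C c) (hX : σ X = X + 1) (p : Polynomial F) :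
    (σ p).degree = p.degree := by
  have hcomp : ∀ q : Polynomial F, σ q = q.comp (X + 1) := by
    have : (σ : Polynomial F →+* Polynomial F) = eval₂RingHom C (X + 1) := by
      apply Polynomial.ringHom_ext
      · intro a; simpa using hC a
      · simpa using hX
    intro q
    have := congrArg (fun f : Polynomial F →+* Polynomial F => f q) this
    simpa [comp] using this
  rw [hcomp]
  by_cases hp : p = 0
  · simp [hp]
  · have h1 : (X + 1 : Polynomial F) = X + C 1 := by simp
    have hne : p.comp (X + 1) ≠ 0 := by
      rw [← hcomp]
      simpa using fun h => hp (σ.injective (by simpa using h))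
    rw [degree_eq_natDegree hne, degree_eq_natDegree hp]
    norm_cast
    rw [natDegree_comp, h1, natDegree_X_add_C, mul_one]

theorem main_deg {F : Type*} [Field F] (σ : RingAut (Polynomial F))
    (hC : ∀ c : F, σ (C c) = C c) (hX : σ X = X + 1)
    (u v : Polynomial F) (hdeg : u.degree ≠ v.degree)
    (p : Polynomial F) (hp : p ≠ 0) :
    (u * σ p - v * p).degree = p.degree + max u.degree v.degree := by
  have hσ := sigma_degree σ hC hX p
  have h1 : (u * σ p).degree = u.degree + p.degree := by rw [degree_mul, hσ]
  have h2 : (v * p).degree = v.degree + p.degree := by rw [degree_mul]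
  have hpb : p.degree ≠ ⊥ := degree_ne_bot.mpr hp
  rcases lt_or_gt_of_ne hdeg with h | h
  · rw [sub_eq_neg_add, degree_add_eq_left_of_degree_lt, degree_neg, h2, max_eq_right h.le, add_comm]
    rw [degree_neg, h1, h2]
    exact WithBot.add_lt_add_right hpb h
  · rw [degree_sub_eq_left_of_degree_lt, h1, max_eq_left h.le, add_comm]
    rw [h1, h2]
    exact WithBot.add_lt_add_right hpb h

theorem polynomial_reduction_degree (F : Type*) [Field F] [CharZero F]
    (σ : RingAut (Polynomial F))
    (hC : ∀ c : F, σ (C c) = C c)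
    (hX : σ X = X + 1)
    (u v : Polynomial F) (hv : v ≠ 0) (hdeg : u.degree ≠ v.degree) :
    (∀ p : Polynomial F, p ≠ 0 →
        (u * σ p - v * p).degree = p.degree + max u.degree v.degree) ∧
    Function.Injective (fun p : Polynomial F => u * σ p - v * p) ∧
    (∀ n : ℕ, (∀ p : Polynomial F, p ≠ 0 → (u * σ p - v * p).degree ≠ (n : WithBot ℕ))
        ↔ (n : WithBot ℕ) < max u.degree v.degree) := by
  have hφ := main_deg σ hC hX u v hdeg
  have hmax : v.degree ≤ max u.degree v.degree := le_max_right _ _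
  have hnb : max u.degree v.degree ≠ ⊥ :=
    fun hb => degree_ne_bot.mpr hv (le_bot_iff.mp (hb ▸ hmax))
  obtain ⟨m, hm⟩ := WithBot.ne_bot_iff_exists.mp hnb
  replace hm : max u.degree v.degree = (m : WithBot ℕ) := hm.symm
  refine ⟨hφ, ?_, ?_⟩
  · intro p q h
    by_contra hne
    have hpq : p - q ≠ 0 := sub_ne_zero.mpr hne
    have h0 : u * σ (p - q) - v * (p - q) = 0 := by
      simp only at h
      rw [map_sub]
      linear_combination h
    have := hφ (p - q) hpq
    rw [h0, degree_zero, hm] at this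
    have hdb : (p - q).degree ≠ ⊥ := degree_ne_bot.mpr hpq
    obtain ⟨k, hk⟩ := WithBot.ne_bot_iff_exists.mp hdb
    rw [← hk] at this
    exact (by simp : ((k : WithBot ℕ) + m) ≠ ⊥) this.symm
  · intro n
    constructor
    · intro hall
      by_contra hle
      push_neg at hle
      rw [hm] at hle
      have hmn : m ≤ n := by exact_mod_cast hle
      have := hφ (X ^ (n - m)) (pow_ne_zero _ X_ne_zero)
      rw [degree_X_pow, hm] at this
      have : (u * σ (X ^ (n - m)) - v * X ^ (n - m)).degree = (n : WithBot ℕ) := by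
        rw [this]; norm_cast; omega
      exact hall _ (pow_ne_zero _ X_ne_zero) this
    · intro hlt p hp
      rw [hφ p hp]
      have h0 : (0 : WithBot ℕ) ≤ p.degree := zero_le_degree_iff.mpr hp
      have : (n : WithBot ℕ) < p.degree + max u.degree v.degree :=
        lt_of_lt_of_le hlt (by
          calc max u.degree v.degree = 0 + max u.degree v.degree := by simp
          _ ≤ p.degree + max u.degree v.degree := add_le_add_left h0 _)
      exact (this.ne').symm ∘ Eq.symm
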